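/- For p > 1 and G connected with m edges, n vertices, minimum degree δ and maximum degree Δ: 2^{p-1}·δ ≤ 2^{p-1}·(2m/n) ≤ λ_p(G) ≤ 2^{p-1}·Δ, with equality anywhere if and only if G is regular. -/

import Mathlib

open Finset

variable {V : Type*}

/-- Signless p-Laplacian form: `Q_p(x) = Σ_{{i,j}∈E} |x_i + x_j|^p`. -/
noncomputable def Qp [Fintype V] (G : SimpleGraph V) [Fintype G.edgeSet] (p : ℝ)
    (x : V → ℝ) : ℝ :=
  ∑ e ∈ G.edgeFinset,
    Sym2.lift ⟨fun i j => |x i + x j| ^ p, fun i j => by simp [add_comm]⟩ e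

/-- The p-norm unit sphere condition. -/
def unitSphere [Fintype V] (p : ℝ) (x : V → ℝ) : Prop := ∑ i, |x i| ^ p = 1

/-- Smallest signless p-Laplacian eigenvalue. -/
noncomputable def qp [Fintype V] (G : SimpleGraph V) [Fintype G.edgeSet] (p : ℝ) : ℝ :=
  sInf {r | ∃ x : V → ℝ, unitSphere p x ∧ Qp G p x = r}

/-- Largest signless p-Laplacian eigenvalue. -/
noncomputable def lamp [Fintype V] (G : SimpleGraph V) [Fintype G.edgeSet] (p : ℝ) : ℝ :=
  sSup {r | ∃ x : V → ℝ, unitSphere p x ∧ Qp G p x = r}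

open Classical in
/-- Number of edges with both endpoints in `S`. -/
noncomputable def eIn [Fintype V] (G : SimpleGraph V) [Fintype G.edgeSet] (S : Finset V) : ℕ :=
  (G.edgeFinset.filter fun e => ∀ v ∈ e, v ∈ S).card

open Classical in
/-- Number of edges with exactly one endpoint in `U`. -/
noncomputable def cutN [Fintype V] (G : SimpleGraph V) [Fintype G.edgeSet] (U : Finset V) : ℕ :=
  (G.edgeFinset.filter fun e => (∃ v ∈ e, v ∈ U) ∧ (∃ w ∈ e, w ∉ U)).card

/-- Desai–Rao bipartiteness parameter ψ(G). -/
noncomputable def psi [Fintype V] [DecidableEq V] (G : SimpleGraph V) [Fintype G.edgeSet] : ℝ :=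
  sInf {r | ∃ S T : Finset V, Disjoint S T ∧ (S ∪ T).Nonempty ∧
    r = (2 * eIn G S + 2 * eIn G T + cutN G (S ∪ T)) / (S ∪ T).card}

open Classical in
/-- `h_g(U)`: min over thresholds `0 ≤ t < max g` of `cut(C_t)/|C_t|` where `C_t = {i : g i > t}`. -/
noncomputable def hgC [Fintype V] [DecidableEq V] (G : SimpleGraph V) [Fintype G.edgeSet]
    (g : V → ℝ) : ℝ :=
  sInf {r | ∃ t : ℝ, 0 ≤ t ∧ t < sSup (Set.range g) ∧
    r = (cutN G (univ.filter fun i => t < g i) : ℝ) / (univ.filter fun i => t < g i).card}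

/-- Eigenpair of the signless p-Laplacian. -/
def IsEigenpair [Fintype V] (G : SimpleGraph V) [DecidableRel G.Adj] (p : ℝ)
    (x : V → ℝ) (μ : ℝ) : Prop :=
  ∀ k, ∑ j ∈ G.neighborFinset k, Real.sign (x k + x j) * |x k + x j| ^ (p - 1)
      = μ * (Real.sign (x k) * |x k| ^ (p - 1))

/-- Vertex bipartiteness: minimum number of vertices to delete to make `G` bipartite. -/
noncomputable def nuG [Fintype V] [DecidableEq V] (G : SimpleGraph V) : ℕ :=
  sInf {k | ∃ S : Finset V, S.card = k ∧ ((SimpleGraph.induce ((↑S : Set V)ᶜ) G).Colorable 2)}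

/-! ### Auxiliary lemmas -/

set_option linter.unusedSectionVars false

section realAux

lemma rpow_add_abs_le {p : ℝ} (hp : 1 < p) (a b : ℝ) :
    |a + b| ^ p ≤ 2 ^ (p - 1) * (|a| ^ p + |b| ^ p) := by
  have h0 : |a + b| ^ p ≤ (|a| + |b|) ^ p :=
    Real.rpow_le_rpow (abs_nonneg _) (abs_add_le a b) (by linarith)
  have hc := (convexOn_rpow hp.le).2 (Set.mem_Ici.mpr (abs_nonneg a))
    (Set.mem_Ici.mpr (abs_nonneg b)) (by norm_num : (0:ℝ) ≤ 1/2) (by norm_num : (0:ℝ) ≤ 1/2)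
    (by norm_num)
  simp only [smul_eq_mul] at hc
  have hmid : ((1:ℝ)/2 * |a| + 1/2 * |b|) = (|a| + |b|) / 2 := by ring
  rw [hmid] at hc
  have h2 : (|a| + |b|) ^ p = 2 ^ p * ((|a| + |b|) / 2) ^ p := by
    rw [← Real.mul_rpow (by norm_num) (by positivity)]
    ring_nf
  have h3 : (2:ℝ) ^ p = 2 * 2 ^ (p - 1) := by
    rw [← Real.rpow_one_add' (by norm_num) (by intro h; linarith)]
    ring_nf
  calc |a + b| ^ p ≤ 2 ^ p * ((|a| + |b|) / 2) ^ p := by rw [← h2]; exact h0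
    _ ≤ 2 ^ p * (1/2 * |a| ^ p + 1/2 * |b| ^ p) := by
        refine mul_le_mul_of_nonneg_left hc (by positivity)
    _ = 2 ^ (p - 1) * (|a| ^ p + |b| ^ p) := by rw [h3]; ring

lemma rpow_add_abs_eq {p : ℝ} (hp : 1 < p) {a b : ℝ}
    (h : |a + b| ^ p = 2 ^ (p - 1) * (|a| ^ p + |b| ^ p)) : a = b := by
  by_contra hne
  rcases eq_or_ne |a| |b| with habs | habs
  · have hb : b ≠ 0 := by
      rintro rfl; simp at habs; exact hne (by simp [habs])
    have hab : a = -b := by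
      rcases abs_eq_abs.mp habs with h1 | h1
      · exact absurd h1 hne
      · exact h1
    rw [hab] at h
    simp only [neg_add_cancel, abs_zero, abs_neg] at h
    rw [Real.zero_rpow (by linarith)] at h
    have : 0 < 2 ^ (p - 1) * (|b| ^ p + |b| ^ p) := by positivity
    rw [← h] at this; exact lt_irrefl 0 this
  · have hc := (strictConvexOn_rpow hp).2 (Set.mem_Ici.mpr (abs_nonneg a))
      (Set.mem_Ici.mpr (abs_nonneg b)) habs (by norm_num : (0:ℝ) < 1/2)
      (by norm_num : (0:ℝ) < 1/2) (by norm_num)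
    simp only [smul_eq_mul] at hc
    have hmid : ((1:ℝ)/2 * |a| + 1/2 * |b|) = (|a| + |b|) / 2 := by ring
    rw [hmid] at hc
    have h2 : (|a| + |b|) ^ p = 2 ^ p * ((|a| + |b|) / 2) ^ p := by
      rw [← Real.mul_rpow (by norm_num) (by positivity)]
      ring_nf
    have h3 : (2:ℝ) ^ p = 2 * 2 ^ (p - 1) := by
      rw [← Real.rpow_one_add' (by norm_num) (by intro h'; linarith)]
      ring_nf
    have hlt : |a + b| ^ p < 2 ^ (p - 1) * (|a| ^ p + |b| ^ p) := by
      calc |a + b| ^ p ≤ (|a| + |b|) ^ p :=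
            Real.rpow_le_rpow (abs_nonneg _) (abs_add_le a b) (by linarith)
        _ = 2 ^ p * ((|a| + |b|) / 2) ^ p := h2
        _ < 2 ^ p * (1/2 * |a| ^ p + 1/2 * |b| ^ p) := by
            refine mul_lt_mul_of_pos_left hc (by positivity)
        _ = 2 ^ (p - 1) * (|a| ^ p + |b| ^ p) := by rw [h3]; ring
    exact absurd h (ne_of_lt hlt)

lemma cont_abs_rpow {p : ℝ} (hp : 0 < p) : Continuous fun t : ℝ => |t| ^ p := by
  rw [continuous_iff_continuousAt]
  intro t
  exact (Real.continuousAt_rpow_const _ _ (Or.inr hp.le)).comp continuous_abs.continuousAt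

lemma abs_rpow_hasDerivAt {p a : ℝ} (b : ℝ) (ha : 0 < a) (hp : 1 < p) :
    HasDerivAt (fun ε => |a + b * ε| ^ p) (p * a ^ (p - 1) * b) 0 := by
  have hg : HasDerivAt (fun ε : ℝ => a + b * ε) b 0 := by
    simpa using ((hasDerivAt_id (0:ℝ)).const_mul b).const_add a
  have h1 : HasDerivAt (fun ε => (a + b * ε) ^ p) (b * p * a ^ (p - 1)) 0 := by
    have := hg.rpow_const (p := p) (Or.inr hp.le)
    simpa using this
  have hcont : ContinuousAt (fun ε : ℝ => a + b * ε) 0 := by fun_prop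
  have hev0 : ∀ᶠ ε in nhds (0:ℝ), 0 < a + b * ε :=
    hcont.eventually (eventually_gt_nhds (by simpa using ha))
  have hev : (fun ε => |a + b * ε| ^ p) =ᶠ[nhds (0:ℝ)] (fun ε => (a + b * ε) ^ p) :=
    hev0.mono fun ε hε => by simp only [abs_of_pos hε]
  have := h1.congr_of_eventuallyEq hev
  rw [show p * a ^ (p - 1) * b = b * p * a ^ (p - 1) by ring]
  exact this

end realAux

/-- the constant unit vector entry -/
noncomputable def cst (V : Type*) [Fintype V] (p : ℝ) : ℝ :=
  ((Fintype.card V : ℝ)⁻¹) ^ (1/p)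

section graphAux
variable [Fintype V] [DecidableEq V] (G : SimpleGraph V) [DecidableRel G.Adj] {p : ℝ}

lemma sum_lift_add (f : V → ℝ) :
    ∑ e ∈ G.edgeFinset, Sym2.lift ⟨fun i j => f i + f j, fun i j => by simp [add_comm]⟩ e
      = ∑ v, (G.degree v : ℝ) * f v := by
  classical
  have h1 : ∀ e ∈ G.edgeFinset,
      Sym2.lift ⟨fun i j => f i + f j, fun i j => by simp [add_comm]⟩ e
        = ∑ v, if v ∈ e then f v else 0 := by
    intro e he
    induction e with
    | _ i j =>
      have hij : i ≠ j := by
        intro h; subst h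
        exact G.loopless.irrefl i (SimpleGraph.mem_edgeFinset.mp he)
      have : ∀ v, (v ∈ s(i,j)) ↔ v ∈ ({i, j} : Finset V) := by
        intro v; simp [Sym2.mem_iff]
      simp only [Sym2.lift_mk]
      rw [Finset.sum_congr rfl (fun v _ => by rw [if_congr (this v) rfl rfl])]
      rw [Finset.sum_ite_mem, Finset.univ_inter, Finset.sum_pair hij]
  rw [Finset.sum_congr rfl h1, Finset.sum_comm]
  refine Finset.sum_congr rfl fun v _ => ?_
  rw [Finset.sum_ite, Finset.sum_const, Finset.sum_const_zero, add_zero,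
    ← SimpleGraph.incidenceFinset_eq_filter, SimpleGraph.card_incidenceFinset_eq_degree,
    nsmul_eq_mul]

lemma Qp_le_weighted (hp : 1 < p) (x : V → ℝ) :
    Qp G p x ≤ 2 ^ (p - 1) * ∑ v, (G.degree v : ℝ) * |x v| ^ p := by
  rw [← sum_lift_add G (fun v => |x v| ^ p), Finset.mul_sum]
  refine Finset.sum_le_sum fun e he => ?_
  induction e with
  | _ i j => simpa [Sym2.lift_mk] using rpow_add_abs_le hp (x i) (x j)

lemma weighted_le_max (x : V → ℝ) (hx : unitSphere p x) :
    ∑ v, (G.degree v : ℝ) * |x v| ^ p ≤ G.maxDegree := by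
  calc ∑ v, (G.degree v : ℝ) * |x v| ^ p
      ≤ ∑ v, (G.maxDegree : ℝ) * |x v| ^ p := by
        refine Finset.sum_le_sum fun v _ => ?_
        have h1 : (G.degree v : ℝ) ≤ G.maxDegree := by
          exact_mod_cast G.degree_le_maxDegree v
        have h2 : (0:ℝ) ≤ |x v| ^ p := by positivity
        exact mul_le_mul_of_nonneg_right h1 h2
    _ = G.maxDegree := by rw [← Finset.mul_sum, hx, mul_one]

lemma Qp_le_max (hp : 1 < p) (x : V → ℝ) (hx : unitSphere p x) :
    Qp G p x ≤ 2 ^ (p - 1) * G.maxDegree := by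
  refine (Qp_le_weighted G hp x).trans ?_
  exact mul_le_mul_of_nonneg_left (weighted_le_max G x hx) (by positivity)

lemma lamp_bddAbove (hp : 1 < p) :
    BddAbove {r | ∃ x : V → ℝ, unitSphere p x ∧ Qp G p x = r} := by
  refine ⟨2 ^ (p - 1) * G.maxDegree, ?_⟩
  rintro r ⟨x, hx, rfl⟩
  exact Qp_le_max G hp x hx

lemma qp_continuous (hp : 1 < p) : Continuous (Qp G p) := by
  refine continuous_finset_sum _ fun e he => ?_
  induction e with
  | _ i j =>
    simp only [Sym2.lift_mk]
    exact (cont_abs_rpow (by linarith)).comp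
      ((continuous_apply i).add (continuous_apply j))

lemma sphere_compact (hp : 1 < p) :
    IsCompact {x : V → ℝ | unitSphere p x} := by
  apply Metric.isCompact_of_isClosed_isBounded
  · have : Continuous fun x : V → ℝ => ∑ i, |x i| ^ p :=
      continuous_finset_sum _ fun i _ => (cont_abs_rpow (by linarith)).comp (continuous_apply i)
    exact isClosed_eq this continuous_const
  · rw [Metric.isBounded_iff_subset_closedBall 0]
    refine ⟨1, fun x hx => ?_⟩
    have hx' : ∑ i, |x i| ^ p = 1 := hx
    rw [Metric.mem_closedBall]
    rw [dist_pi_le_iff (by norm_num)]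
    intro i
    simp only [Real.dist_eq, Pi.zero_apply, sub_zero]
    by_contra hgt
    push_neg at hgt
    have h1 : (1:ℝ) < |x i| ^ p :=
      (Real.one_lt_rpow_iff_of_pos (by linarith)).mpr (Or.inl ⟨hgt, by linarith⟩)
    have h2 : |x i| ^ p ≤ ∑ j, |x j| ^ p :=
      Finset.single_le_sum (f := fun j => |x j| ^ p) (fun j _ => by positivity) (mem_univ i)
    rw [hx'] at h2
    linarith

lemma lamp_exists_max (hp : 1 < p) (x₀ : V → ℝ) (hx₀ : unitSphere p x₀) :
    ∃ z : V → ℝ, unitSphere p z ∧ lamp G p = Qp G p z ∧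
      ∀ y : V → ℝ, unitSphere p y → Qp G p y ≤ Qp G p z := by
  obtain ⟨z, hz, hmax⟩ := (sphere_compact (V := V) hp).exists_isMaxOn ⟨x₀, hx₀⟩
    (qp_continuous G hp).continuousOn
  refine ⟨z, hz, ?_, fun y hy => hmax hy⟩
  refine (IsGreatest.csSup_eq ⟨⟨z, hz, rfl⟩, ?_⟩)
  rintro r ⟨y, hy, rfl⟩
  exact hmax hy

variable [Nonempty V]

lemma cst_pos (hp : 1 < p) : 0 < cst V p := by
  have : (0:ℝ) < (Fintype.card V : ℝ)⁻¹ := by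
    have : 0 < Fintype.card V := Fintype.card_pos
    positivity
  exact Real.rpow_pos_of_pos this _

lemma cst_rpow (hp : 1 < p) : (cst V p) ^ p = (Fintype.card V : ℝ)⁻¹ := by
  rw [cst, ← Real.rpow_mul (by positivity), one_div,
    inv_mul_cancel₀ (by linarith : p ≠ 0), Real.rpow_one]

lemma cst_unit (hp : 1 < p) : unitSphere p (fun _ : V => cst V p) := by
  unfold unitSphere
  rw [Finset.sum_const, Finset.card_univ, abs_of_pos (cst_pos hp), cst_rpow hp, nsmul_eq_mul]
  field_simp

lemma Qp_const (hp : 1 < p) :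
    Qp G p (fun _ => cst V p)
      = 2 ^ (p - 1) * (2 * G.edgeFinset.card / (Fintype.card V)) := by
  have hc := cst_pos (V := V) hp
  have h1 : ∀ e ∈ G.edgeFinset,
      Sym2.lift ⟨fun i j => |(fun _ : V => cst V p) i + (fun _ : V => cst V p) j| ^ p,
        fun i j => by simp [add_comm]⟩ e = 2 ^ p * (Fintype.card V : ℝ)⁻¹ := by
    intro e _
    induction e with
    | _ i j =>
      rw [Sym2.lift_mk]
      show |cst V p + cst V p| ^ p = _
      rw [abs_of_pos (by linarith), ← two_mul,
        Real.mul_rpow (by norm_num) hc.le, cst_rpow hp]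
  rw [Qp, Finset.sum_congr rfl h1, Finset.sum_const, nsmul_eq_mul]
  have h3 : (2:ℝ) ^ p = 2 * 2 ^ (p - 1) := by
    rw [← Real.rpow_one_add' (by norm_num) (by intro h'; linarith)]
    ring_nf
  rw [h3]; ring

end graphAux

section homog
variable [Fintype V] [DecidableEq V] (G : SimpleGraph V) [DecidableRel G.Adj] {p : ℝ}

lemma Qp_smul (hp : 1 < p) (t : ℝ) (x : V → ℝ) :
    Qp G p (fun v => t * x v) = |t| ^ p * Qp G p x := by
  rw [Qp, Qp, Finset.mul_sum]
  refine Finset.sum_congr rfl fun e he => ?_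
  induction e with
  | _ i j =>
    rw [Sym2.lift_mk, Sym2.lift_mk]
    show |t * x i + t * x j| ^ p = _
    rw [← mul_add, abs_mul, Real.mul_rpow (abs_nonneg _) (abs_nonneg _)]

lemma sum_abs_smul (hp : 1 < p) (t : ℝ) (x : V → ℝ) :
    ∑ v, |t * x v| ^ p = |t| ^ p * ∑ v, |x v| ^ p := by
  rw [Finset.mul_sum]
  refine Finset.sum_congr rfl fun v _ => ?_
  rw [abs_mul, Real.mul_rpow (abs_nonneg _) (abs_nonneg _)]

lemma Qp_le_lamp (hp : 1 < p)
    (hbdd : BddAbove {r | ∃ x : V → ℝ, unitSphere p x ∧ Qp G p x = r})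
    (y : V → ℝ) : Qp G p y ≤ lamp G p * ∑ v, |y v| ^ p := by
  set N := ∑ v, |y v| ^ p with hN
  have hN0 : 0 ≤ N := Finset.sum_nonneg fun v _ => by positivity
  rcases eq_or_lt_of_le hN0 with h0 | hpos
  · have hy : ∀ v, y v = 0 := by
      intro v
      have hz : |y v| ^ p = 0 := by
        have hle : |y v| ^ p ≤ N := Finset.single_le_sum
          (f := fun v => |y v| ^ p) (fun v _ => by positivity) (Finset.mem_univ v)
        have : (0:ℝ) ≤ |y v| ^ p := by positivity
        linarith [h0.symm ▸ hle]
      have := Real.rpow_eq_zero_iff_of_nonneg (abs_nonneg (y v)) |>.mp hz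
      simpa using this.1
    have : Qp G p y = 0 := by
      rw [Qp]
      refine Finset.sum_eq_zero fun e he => ?_
      induction e with
      | _ i j =>
        rw [Sym2.lift_mk]
        show |y i + y j| ^ p = 0
        rw [hy i, hy j]
        simp [Real.zero_rpow (by linarith : p ≠ 0)]
    rw [this, ← h0, mul_zero]
  · set t := N ^ (-(1/p)) with ht
    have htpos : 0 < t := Real.rpow_pos_of_pos hpos _
    have htp : t ^ p = N⁻¹ := by
      rw [ht, ← Real.rpow_mul hpos.le]
      rw [show (-(1/p)) * p = -1 by field_simp, Real.rpow_neg_one]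
    have hunit : unitSphere p (fun v => t * y v) := by
      unfold unitSphere
      rw [sum_abs_smul hp t y, abs_of_pos htpos, htp, ← hN, inv_mul_cancel₀ (ne_of_gt hpos)]
    have hmem : Qp G p (fun v => t * y v) ≤ lamp G p :=
      le_csSup hbdd ⟨_, hunit, rfl⟩
    rw [Qp_smul G hp, abs_of_pos htpos, htp] at hmem
    calc Qp G p y = N * (N⁻¹ * Qp G p y) := by field_simp
      _ ≤ N * lamp G p := mul_le_mul_of_nonneg_left hmem hpos.le
      _ = lamp G p * N := mul_comm _ _

end homog

section middle
variable [Fintype V] [DecidableEq V] (G : SimpleGraph V) [DecidableRel G.Adj] {p : ℝ}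
variable [Nonempty V]

lemma degree_eq_of_middle (hp : 1 < p)
    (hbdd : BddAbove {r | ∃ x : V → ℝ, unitSphere p x ∧ Qp G p x = r})
    (hL : 2 ^ (p - 1) * (2 * G.edgeFinset.card / (Fintype.card V)) = lamp G p) (k : V) :
    (G.degree k : ℝ) = 2 * G.edgeFinset.card / (Fintype.card V) := by
  classical
  set c := cst V p with hc
  have hcpos : 0 < c := cst_pos hp
  set L := lamp G p with hLdef
  set x : ℝ → V → ℝ := fun ε v => c + if v = k then ε else 0 with hx
  have hQ : HasDerivAt (fun ε => Qp G p (x ε))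
      (p * (2*c) ^ (p - 1) * (G.degree k)) 0 := by
    have hsum : ∀ e ∈ G.edgeFinset, HasDerivAt
        (fun ε => Sym2.lift ⟨fun i j => |x ε i + x ε j| ^ p,
          fun i j => by simp [add_comm]⟩ e)
        (p * (2*c) ^ (p - 1) * (if k ∈ e then (1:ℝ) else 0)) 0 := by
      intro e he
      induction e with
      | _ i j =>
        have hij : i ≠ j := by
          intro h; subst h
          exact G.loopless.irrefl i (SimpleGraph.mem_edgeFinset.mp he)
        set b : ℝ := (if i = k then (1:ℝ) else 0) + (if j = k then (1:ℝ) else 0) with hb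
        have harg : ∀ ε, x ε i + x ε j = 2*c + b * ε := by
          intro ε; rw [hx, hb]; simp only; split_ifs <;> ring
        have hind : (if k ∈ s(i,j) then (1:ℝ) else 0) = b := by
          simp only [Sym2.mem_iff, hb]
          rcases eq_or_ne i k with hi | hi <;> rcases eq_or_ne j k with hj | hj
          · exact absurd (hi.trans hj.symm) hij
          · simp [hi, hj, Ne.symm hj]
          · simp [hi, hj, Ne.symm hi]
          · simp [hi, hj, Ne.symm hi, Ne.symm hj]
        simp only [Sym2.lift_mk]
        rw [show (fun ε => |x ε i + x ε j| ^ p) = fun ε => |2*c + b*ε| ^ p from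
          funext fun ε => by rw [harg ε], hind]
        exact abs_rpow_hasDerivAt b (by linarith) hp
    have hs := HasDerivAt.fun_sum hsum
    have hsum2 : ∑ e ∈ G.edgeFinset,
        p * (2*c) ^ (p - 1) * (if k ∈ e then (1:ℝ) else 0)
        = p * (2*c) ^ (p - 1) * (G.degree k) := by
      rw [← Finset.mul_sum, Finset.sum_boole, ← SimpleGraph.incidenceFinset_eq_filter,
        SimpleGraph.card_incidenceFinset_eq_degree]
    rw [hsum2] at hs
    exact hs
  have hN : HasDerivAt (fun ε => ∑ v, |x ε v| ^ p) (p * c ^ (p - 1)) 0 := by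
    have hsum : ∀ v ∈ (univ : Finset V), HasDerivAt (fun ε => |x ε v| ^ p)
        (if v = k then p * c ^ (p - 1) else 0) 0 := by
      intro v _
      rcases eq_or_ne v k with hv | hv
      · subst hv
        rw [if_pos rfl]
        have : (fun ε => |x ε v| ^ p) = fun ε => |c + 1 * ε| ^ p := by
          funext ε; rw [hx]; simp
        rw [this]
        simpa using abs_rpow_hasDerivAt 1 hcpos hp
      · have : (fun ε => |x ε v| ^ p) = fun _ => |c| ^ p := by
          funext ε; rw [hx]; simp [hv]
        rw [this, if_neg hv]
        exact hasDerivAt_const _ _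
    have hs := HasDerivAt.fun_sum hsum
    rwa [Finset.sum_ite_eq' univ k (fun _ => p * c ^ (p - 1)), if_pos (mem_univ k)] at hs
  have hF : HasDerivAt (fun ε => Qp G p (x ε) - L * ∑ v, |x ε v| ^ p)
      (p * (2*c) ^ (p - 1) * (G.degree k) - L * (p * c ^ (p - 1))) 0 :=
    hQ.sub (hN.const_mul L)
  have hx0 : x 0 = fun _ => c := by funext v; rw [hx]; simp
  have hF0 : Qp G p (x 0) - L * ∑ v, |x 0 v| ^ p = 0 := by
    have hu := cst_unit (V := V) hp
    unfold unitSphere at hu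
    rw [hx0, Qp_const G hp, hu, hL, mul_one, sub_self]
  have hmax : IsLocalMax (fun ε => Qp G p (x ε) - L * ∑ v, |x ε v| ^ p) 0 := by
    refine Filter.Eventually.of_forall fun ε => ?_
    show Qp G p (x ε) - L * ∑ v, |x ε v| ^ p ≤ Qp G p (x 0) - L * ∑ v, |x 0 v| ^ p
    rw [hF0]
    have := Qp_le_lamp G hp hbdd (x ε)
    simp only [← hLdef] at this
    linarith
  have hzero := hmax.hasDerivAt_eq_zero hF
  have h2c : (2*c) ^ (p - 1) = 2 ^ (p - 1) * c ^ (p - 1) :=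
    Real.mul_rpow (by norm_num) hcpos.le
  rw [h2c] at hzero
  have hne : p * c ^ (p - 1) ≠ 0 := by
    have : 0 < c ^ (p - 1) := Real.rpow_pos_of_pos hcpos _
    positivity
  have h2 : 2 ^ (p - 1) * (G.degree k : ℝ) = L := by
    apply mul_right_cancel₀ hne
    linear_combination hzero
  rw [← hL] at h2
  exact mul_left_cancel₀ (by positivity : ((2:ℝ)) ^ (p-1) ≠ 0) h2

end middle

lemma walk_const {G : SimpleGraph V} {z : V → ℝ} (h : ∀ i j, G.Adj i j → z i = z j) :
    ∀ {u v : V}, G.Walk u v → z u = z v := by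
  intro u v w
  induction w with
  | nil => rfl
  | cons hadj _ ih => exact (h _ _ hadj).trans ih

section maxcase
variable [Fintype V] [DecidableEq V] (G : SimpleGraph V) [DecidableRel G.Adj] {p : ℝ}

lemma sum_degree_real : ∑ v, (G.degree v : ℝ) = 2 * G.edgeFinset.card := by
  exact_mod_cast congrArg (Nat.cast (R := ℝ)) G.sum_degrees_eq_twice_card_edges

lemma regular_of_lamp_max (hp : 1 < p) (hconn : G.Connected)
    (hmax : lamp G p = 2 ^ (p - 1) * G.maxDegree) :
    ∀ v, G.degree v = G.maxDegree := by
  have : Nonempty V := hconn.nonempty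
  obtain ⟨z, hz, hlz, hmx⟩ := lamp_exists_max G hp (fun _ => cst V p) (cst_unit hp)
  have hQz : Qp G p z = 2 ^ (p - 1) * G.maxDegree := by rw [← hlz, hmax]
  set W := ∑ v, (G.degree v : ℝ) * |z v| ^ p with hW
  have h1 : Qp G p z ≤ 2 ^ (p - 1) * W := Qp_le_weighted G hp z
  have h2 : W ≤ G.maxDegree := weighted_le_max G z hz
  have h2' : 2 ^ (p-1) * W ≤ 2 ^ (p-1) * (G.maxDegree : ℝ) :=
    mul_le_mul_of_nonneg_left h2 (by positivity)
  have hWeq : W = G.maxDegree := by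
    have heq : 2 ^ (p-1) * W = 2 ^ (p-1) * (G.maxDegree : ℝ) := by
      refine le_antisymm h2' ?_
      rw [← hQz]; exact h1
    exact mul_left_cancel₀ (by positivity : ((2:ℝ)) ^ (p-1) ≠ 0) heq
  have hQeq : Qp G p z = 2 ^ (p-1) * W := by rw [hQz, hWeq]
  -- termwise equality on edges
  have hle : ∀ e ∈ G.edgeFinset,
      Sym2.lift ⟨fun i j => |z i + z j| ^ p, fun i j => by simp [add_comm]⟩ e
        ≤ 2 ^ (p-1) * Sym2.lift ⟨fun i j => |z i| ^ p + |z j| ^ p,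
            fun i j => by simp [add_comm]⟩ e := by
    intro e he
    induction e with
    | _ i j => simpa [Sym2.lift_mk] using rpow_add_abs_le hp (z i) (z j)
  have hsums : ∑ e ∈ G.edgeFinset,
      Sym2.lift ⟨fun i j => |z i + z j| ^ p, fun i j => by simp [add_comm]⟩ e
      = ∑ e ∈ G.edgeFinset, 2 ^ (p-1) * Sym2.lift ⟨fun i j => |z i| ^ p + |z j| ^ p,
          fun i j => by simp [add_comm]⟩ e := by
    have hR : ∑ e ∈ G.edgeFinset, 2 ^ (p-1) *
        Sym2.lift ⟨fun i j => |z i| ^ p + |z j| ^ p, fun i j => by simp [add_comm]⟩ e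
        = 2 ^ (p-1) * W := by
      rw [← Finset.mul_sum, sum_lift_add G (fun v => |z v| ^ p)]
    rw [hR]
    exact hQeq
  have hterm := (Finset.sum_eq_sum_iff_of_le hle).1 hsums
  have hadj : ∀ i j, G.Adj i j → z i = z j := by
    intro i j hij
    have he : s(i,j) ∈ G.edgeFinset := SimpleGraph.mem_edgeFinset.mpr hij
    have := hterm _ he
    rw [Sym2.lift_mk, Sym2.lift_mk] at this
    exact rpow_add_abs_eq hp this
  obtain v₀ := Classical.arbitrary V
  set a := z v₀ with ha
  have hzv : ∀ v, z v = a := fun v =>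
    (hconn.preconnected v v₀).elim fun w => walk_const hadj w
  have hn : (0:ℝ) < Fintype.card V := by exact_mod_cast Fintype.card_pos
  have hna : (Fintype.card V : ℝ) * |a| ^ p = 1 := by
    have hz' : ∑ v, |z v| ^ p = 1 := hz
    rw [Finset.sum_congr rfl (fun v _ => by rw [hzv v]), Finset.sum_const,
      Finset.card_univ, nsmul_eq_mul] at hz'
    exact hz'
  have hap : |a| ^ p = (Fintype.card V : ℝ)⁻¹ := by
    field_simp
    linarith
  have hsumd : (∑ v, (G.degree v : ℝ)) = (Fintype.card V) * G.maxDegree := by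
    have h := hWeq
    rw [hW, Finset.sum_congr rfl (fun v _ => by rw [hzv v]), ← Finset.sum_mul, hap] at h
    field_simp at h
    linarith
  have hnat : ∑ v, G.degree v = Fintype.card V * G.maxDegree := by
    exact_mod_cast hsumd
  have hfin := (Finset.sum_eq_sum_iff_of_le
    (fun v (_ : v ∈ (univ : Finset V)) => G.degree_le_maxDegree v)).1 (by
      rw [hnat, Finset.sum_const, Finset.card_univ, smul_eq_mul])
  exact fun v => hfin v (mem_univ v)

lemma minDeg_le_avg [Nonempty V] :
    (G.minDegree : ℝ) ≤ 2 * G.edgeFinset.card / (Fintype.card V) := by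
  have hn : (0:ℝ) < Fintype.card V := by exact_mod_cast Fintype.card_pos
  rw [le_div_iff₀ hn]
  calc (G.minDegree : ℝ) * Fintype.card V = ∑ _v : V, (G.minDegree : ℝ) := by
        rw [Finset.sum_const, Finset.card_univ, nsmul_eq_mul]; ring
    _ ≤ ∑ v, (G.degree v : ℝ) := by
        refine Finset.sum_le_sum fun v _ => ?_
        exact_mod_cast G.minDegree_le_degree v
    _ = 2 * G.edgeFinset.card := sum_degree_real G

lemma regular_of_min [Nonempty V]
    (h : (G.minDegree : ℝ) = 2 * G.edgeFinset.card / (Fintype.card V)) :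
    ∀ v, G.degree v = G.minDegree := by
  have hn : (0:ℝ) < Fintype.card V := by exact_mod_cast Fintype.card_pos
  have hsum : ∑ _v : V, (G.minDegree : ℝ) = ∑ v, (G.degree v : ℝ) := by
    rw [Finset.sum_const, Finset.card_univ, nsmul_eq_mul, sum_degree_real G, h]
    field_simp
  have hsumnat : ∑ _v : V, G.minDegree = ∑ v, G.degree v := by exact_mod_cast hsum
  have hfin := (Finset.sum_eq_sum_iff_of_le
    (fun v (_ : v ∈ (univ : Finset V)) => G.minDegree_le_degree v)).1 hsumnat
  exact fun v => (hfin v (mem_univ v)).symm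

end maxcase

theorem stmt_15 [Fintype V] [DecidableEq V] (G : SimpleGraph V) [DecidableRel G.Adj]
    (hc : G.Connected) (p : ℝ) (hp : 1 < p) :
    ((2 : ℝ) ^ (p - 1) * G.minDegree ≤
        (2 : ℝ) ^ (p - 1) * (2 * G.edgeFinset.card / (Fintype.card V)) ∧
      (2 : ℝ) ^ (p - 1) * (2 * G.edgeFinset.card / (Fintype.card V)) ≤ lamp G p ∧
      lamp G p ≤ (2 : ℝ) ^ (p - 1) * G.maxDegree) ∧
    (((2 : ℝ) ^ (p - 1) * G.minDegree =
        (2 : ℝ) ^ (p - 1) * (2 * G.edgeFinset.card / (Fintype.card V)) ∨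
      (2 : ℝ) ^ (p - 1) * (2 * G.edgeFinset.card / (Fintype.card V)) = lamp G p ∨
      lamp G p = (2 : ℝ) ^ (p - 1) * G.maxDegree) ↔
        ∃ d, G.IsRegularOfDegree d) := by
  have hne : Nonempty V := hc.nonempty
  have h2pos : (0:ℝ) < 2 ^ (p-1) := by positivity
  have hbdd := lamp_bddAbove G (p := p) hp
  constructor
  · refine ⟨mul_le_mul_of_nonneg_left (minDeg_le_avg G) h2pos.le, ?_, ?_⟩
    · have hmem : (2 : ℝ) ^ (p - 1) * (2 * G.edgeFinset.card / (Fintype.card V))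
          ∈ {r | ∃ x : V → ℝ, unitSphere p x ∧ Qp G p x = r} :=
        ⟨fun _ => cst V p, cst_unit hp, Qp_const G hp⟩
      exact le_csSup hbdd hmem
    · refine csSup_le ⟨_, ⟨fun _ => cst V p, cst_unit hp, rfl⟩⟩ ?_
      rintro r ⟨x, hx, rfl⟩
      exact Qp_le_max G hp x hx
  · constructor
    · rintro (h1 | h2 | h3)
      · have hmin : (G.minDegree : ℝ) = 2 * G.edgeFinset.card / (Fintype.card V) :=
          mul_left_cancel₀ (ne_of_gt h2pos) h1
        exact ⟨G.minDegree, fun v => regular_of_min G hmin v⟩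
      · obtain v₀ := Classical.arbitrary V
        refine ⟨G.degree v₀, fun v => ?_⟩
        have hv := degree_eq_of_middle G hp hbdd h2 v
        have hv₀ := degree_eq_of_middle G hp hbdd h2 v₀
        exact_mod_cast hv.trans hv₀.symm
      · exact ⟨G.maxDegree, fun v => regular_of_lamp_max G hp hc h3 v⟩
    · rintro ⟨d, hreg⟩
      left
      have hmin : G.minDegree = d := by
        obtain ⟨v, hv⟩ := G.exists_minimal_degree_vertex
        rw [hv, hreg v]
      have hsum : ∑ v, G.degree v = Fintype.card V * d := by
        rw [Finset.sum_congr rfl (fun v _ => hreg v), Finset.sum_const,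
          Finset.card_univ, smul_eq_mul]
      have h2m : 2 * (G.edgeFinset.card : ℝ) = (Fintype.card V) * d := by
        have h := hsum
        rw [G.sum_degrees_eq_twice_card_edges] at h
        exact_mod_cast h
      have hn : (0:ℝ) < Fintype.card V := by exact_mod_cast Fintype.card_pos
      have : (G.minDegree : ℝ) = 2 * G.edgeFinset.card / (Fintype.card V) := by
        rw [hmin, h2m]
        field_simp
      rw [this]
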